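/- Let w be a 1-prefix normal binary word. A word w is 1-prefix normal if and only if for all i, j ≥ 1 with i + j − 1 ≤ |w|₁, pos₁(w, i) + pos₁(w, j) − 1 ≤ pos₁(w, i + j − 1). -/

import Mathlib

/-- `w` is 1-prefix normal: no factor of `w` has more 1s than the prefix of the same length. -/
def IsPrefixNormal1 (w : List Bool) : Prop :=
  ∀ v : List Bool, v <:+: w → v.count true ≤ (w.take v.length).count true

/-- Position of the `i`-th 1 in `w`: least `k` such that the length-`k` prefix contains `i` ones. -/
noncomputable def pos1 (w : List Bool) (i : ℕ) : ℕ :=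
  sInf {k : ℕ | ((w.take k).count true) = i}

private lemma ctm (w : List Bool) {a b : ℕ} (h : a ≤ b) :
    (w.take a).count true ≤ (w.take b).count true :=
  ((List.take_isPrefix_take.mpr (Or.inl h)).sublist).count_le true

private lemma ctstep (w : List Bool) (k : ℕ) :
    (w.take (k+1)).count true ≤ (w.take k).count true + 1 := by
  rw [List.take_add, List.count_append]
  have := ((w.drop k).take 1).count_le_length (a := true)
  have := List.length_take_le 1 (w.drop k)
  omega

/-- Intermediate value property for prefix counts. -/
private lemma exists_take_count (w : List Bool) (i k : ℕ) (h : i ≤ (w.take k).count true) :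
    ∃ m ≤ k, (w.take m).count true = i := by
  induction k with
  | zero => exact ⟨0, le_refl _, by simpa using (Nat.le_zero.mp (by simpa using h)).symm⟩
  | succ k ih =>
    by_cases h' : i ≤ (w.take k).count true
    · obtain ⟨m, hm, hc⟩ := ih h'
      exact ⟨m, hm.trans k.le_succ, hc⟩
    · push_neg at h'
      have step := ctstep w k
      exact ⟨k+1, le_refl _, by omega⟩

private lemma pos1_count (w : List Bool) {i : ℕ} (h : i ≤ w.count true) :
    (w.take (pos1 w i)).count true = i := by
  obtain ⟨m, _, hm⟩ := exists_take_count w i w.length (by simpa using h)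
  have hne : {k : ℕ | ((w.take k).count true) = i}.Nonempty := ⟨m, hm⟩
  exact Nat.sInf_mem hne

private lemma pos1_le (w : List Bool) {i k : ℕ} (h : (w.take k).count true = i) :
    pos1 w i ≤ k :=
  Nat.sInf_le h

private lemma pos1_le_iff (w : List Bool) {i : ℕ} (h : i ≤ w.count true) (k : ℕ) :
    pos1 w i ≤ k ↔ i ≤ (w.take k).count true := by
  constructor
  · intro hk
    calc i = (w.take (pos1 w i)).count true := (pos1_count w h).symm
    _ ≤ _ := ctm w hk
  · intro hk
    obtain ⟨m, hm, hc⟩ := exists_take_count w i k hk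
    exact (pos1_le w hc).trans hm

private lemma pos1_pred (w : List Bool) {i : ℕ} (h1 : 1 ≤ i) (h : i ≤ w.count true) :
    (w.take (pos1 w i - 1)).count true = i - 1 ∧ 1 ≤ pos1 w i := by
  have hp : 1 ≤ pos1 w i := by
    by_contra hc
    have : pos1 w i ≤ 0 := by omega
    have := (pos1_le_iff w h 0).mp this
    simp at this; omega
  refine ⟨?_, hp⟩
  have hc : (w.take (pos1 w i)).count true = i := pos1_count w h
  have hle : (w.take (pos1 w i - 1)).count true ≤ i := by
    calc _ ≤ (w.take (pos1 w i)).count true := ctm w (Nat.sub_le _ _)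
    _ = i := hc
  have hne : (w.take (pos1 w i - 1)).count true ≠ i := fun he =>
    absurd (pos1_le w he) (by omega)
  have hstep := ctstep w (pos1 w i - 1)
  rw [Nat.sub_add_cancel hp, hc] at hstep
  omega

theorem stmt_10 (w : List Bool) :
    IsPrefixNormal1 w ↔
      ∀ i j, 1 ≤ i → 1 ≤ j → i + j - 1 ≤ w.count true →
        pos1 w i + pos1 w j - 1 ≤ pos1 w (i + j - 1) := by
  constructor
  · intro hpn i j hi hj hij
    have hic : i ≤ w.count true := by omega
    have hjc : j ≤ w.count true := by omega
    obtain ⟨hcp1, hp1⟩ := pos1_pred w hi hic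
    have hcr : (w.take (pos1 w (i + j - 1))).count true = i + j - 1 := pos1_count w hij
    have hpr : pos1 w i ≤ pos1 w (i + j - 1) := (pos1_le_iff w hic _).mpr (by omega)
    have hrlen : pos1 w (i + j - 1) ≤ w.length :=
      (pos1_le_iff w hij w.length).mpr (by simpa using hij)
    -- the factor from the i-th one to the (i+j-1)-th one
    have hvinf : (w.drop (pos1 w i - 1)).take (pos1 w (i + j - 1) - (pos1 w i - 1)) <:+: w :=
      ((w.drop (pos1 w i - 1)).take_prefix _).isInfix.trans (w.drop_suffix _).isInfix
    have hsplit : (w.take (pos1 w (i + j - 1))).count true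
        = (w.take (pos1 w i - 1)).count true
          + ((w.drop (pos1 w i - 1)).take (pos1 w (i + j - 1) - (pos1 w i - 1))).count true := by
      have he : pos1 w (i + j - 1)
          = (pos1 w i - 1) + (pos1 w (i + j - 1) - (pos1 w i - 1)) := by omega
      conv_lhs => rw [he]
      rw [List.take_add, List.count_append]
    have hvcount : ((w.drop (pos1 w i - 1)).take
        (pos1 w (i + j - 1) - (pos1 w i - 1))).count true = j := by omega
    have hvlen : ((w.drop (pos1 w i - 1)).take
        (pos1 w (i + j - 1) - (pos1 w i - 1))).length
        = pos1 w (i + j - 1) - (pos1 w i - 1) := by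
      rw [List.length_take, List.length_drop]
      omega
    have hfac := hpn _ hvinf
    rw [hvcount, hvlen] at hfac
    have hq : pos1 w j ≤ pos1 w (i + j - 1) - (pos1 w i - 1) :=
      (pos1_le_iff w hjc _).mpr hfac
    omega
  · intro H v hv
    obtain ⟨s, t, hw⟩ := hv
    by_cases hj0 : v.count true = 0
    · simp [hj0]
    have hj : 1 ≤ v.count true := by omega
    set j := v.count true with hjdef
    set i := s.count true + 1 with hidef
    have hi : 1 ≤ i := by omega
    have htake_s : w.take s.length = s := by
      rw [← hw, List.append_assoc, List.take_left]
    have htake_sv : w.take (s.length + v.length) = s ++ v := by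
      rw [← hw, ← List.length_append, List.take_left]
    have hcsv : (w.take (s.length + v.length)).count true = i + j - 1 := by
      rw [htake_sv, List.count_append]; omega
    have hijc : i + j - 1 ≤ w.count true := by
      calc i + j - 1 = (w.take (s.length + v.length)).count true := hcsv.symm
      _ ≤ w.count true := (w.take_sublist _).count_le true
    have hic : i ≤ w.count true := by omega
    have hjc : j ≤ w.count true := by omega
    have hH := H i j hi hj hijc
    have h1 : pos1 w (i + j - 1) ≤ s.length + v.length := pos1_le w hcsv
    have h2 : ¬ pos1 w i ≤ s.length := by
      intro hc
      have := (pos1_le_iff w hic s.length).mp hc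
      rw [htake_s] at this
      omega
    have h3 : 1 ≤ pos1 w j := (pos1_pred w hj hjc).2
    have h4 : pos1 w j ≤ v.length := by omega
    calc v.count true = (w.take (pos1 w j)).count true := (pos1_count w hjc).symm
    _ ≤ (w.take v.length).count true := ctm w h4
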